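/- Let b > 0 and let Ψ : ℝ² × ℝ × ℝ → ℝ, written Ψ(x,y,φ,μ), be continuous on [−b,b]² × [0,2π] × [−1,1] with continuous partial derivatives ∂ₓΨ and ∂ᵧΨ there. Suppose Ψ satisfies the vacuum inflow condition on the square: Ψ(−b,y,φ,μ) = 0 whenever cos φ ≥ 0, Ψ(b,y,φ,μ) = 0 whenever cos φ ≤ 0, Ψ(x,−b,φ,μ) = 0 whenever sin φ ≥ 0, and Ψ(x,b,φ,μ) = 0 whenever sin φ ≤ 0, for all admissible values of the remaining variables. Let Σ_t : ℝ² → ℝ be continuous on [−b,b]² with Σ_t(x,y) ≥ σ_* > 0 for all (x,y) ∈ [−b,b]². Then ∫_{−1}^{1} ∫_{0}^{2π} ∫_{−b}^{b} ∫_{−b}^{b} (√(1−μ²)(cos φ · ∂ₓΨ + sin φ · ∂ᵧΨ) + Σ_t Ψ) Ψ dx dy dφ dμ ≥ σ_* ∫_{−1}^{1} ∫_{0}^{2π} ∫_{−b}^{b} ∫_{−b}^{b} Ψ² dx dy dφ dμ. -/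

import Mathlib

open Set Real

open MeasureTheory intervalIntegral

lemma my_exists_ext {X : Type*} [TopologicalSpace X] [NormalSpace X] {s : Set X}
    (hs : IsClosed s) {f : X → ℝ} (hf : ContinuousOn f s) :
    ∃ g : X → ℝ, Continuous g ∧ EqOn g f s := by
  obtain ⟨g, hg⟩ := ContinuousMap.exists_restrict_eq (Y := ℝ) hs ⟨s.restrict f, hf.restrict⟩
  refine ⟨g, g.continuous, fun x hx => ?_⟩
  have := congrFun (congrArg DFunLike.coe hg) ⟨x, hx⟩
  exact this

lemma my_ftc_sq {a b : ℝ} (hab : a ≤ b) {f f' : ℝ → ℝ}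
    (hf : ContinuousOn f (Icc a b))
    (hd : ∀ x ∈ Icc a b, HasDerivWithinAt f (f' x) (Icc a b) x)
    (hint : IntervalIntegrable (fun x => f' x * f x) volume a b) :
    ∫ x in a..b, f' x * f x = f b ^ 2 / 2 - f a ^ 2 / 2 := by
  apply integral_eq_sub_of_hasDeriv_right_of_le hab
  · exact (hf.pow 2).div_const 2
  · intro x hx
    have hmem : Icc a b ∈ nhds x := Icc_mem_nhds hx.1 hx.2
    have h1 : HasDerivAt f (f' x) x := (hd x (Ioo_subset_Icc_self hx)).hasDerivAt hmem
    have h2 : HasDerivAt (fun t => f t ^ 2 / 2) (f' x * f x) x := by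
      have : HasDerivAt (fun t => f t ^ 2 / 2) (((2:ℕ):ℝ) * f x ^ (2 - 1) * f' x / 2) x :=
        (h1.pow 2).div_const 2
      convert this using 1
      ring
    exact h2.hasDerivWithinAt
  · exact hint

lemma my_sign {a b c : ℝ} (hab : a ≤ b) {f f' : ℝ → ℝ}
    (hf : ContinuousOn f (Icc a b))
    (hd : ∀ x ∈ Icc a b, HasDerivWithinAt f (f' x) (Icc a b) x)
    (hint : IntervalIntegrable (fun x => f' x * f x) volume a b)
    (h0 : 0 ≤ c → f a = 0) (h1 : c ≤ 0 → f b = 0) :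
    0 ≤ c * ∫ x in a..b, f' x * f x := by
  rw [my_ftc_sq hab hf hd hint]
  rcases le_total 0 c with hc | hc
  · rw [h0 hc]; nlinarith [sq_nonneg (f b)]
  · rw [h1 hc]; nlinarith [sq_nonneg (f a)]

lemma my_swap {a b : ℝ} (hab : a ≤ b) {f : ℝ → ℝ → ℝ}
    (hf : Continuous fun p : ℝ × ℝ => f p.1 p.2) :
    ∫ y in a..b, ∫ x in a..b, f y x = ∫ x in a..b, ∫ y in a..b, f y x := by
  have hint : Integrable (Function.uncurry f)
      ((volume.restrict (Ioc a b)).prod (volume.restrict (Ioc a b))) := by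
    rw [Measure.prod_restrict]
    exact ((hf.continuousOn.integrableOn_compact (isCompact_Icc.prod isCompact_Icc)).mono_set
      (prod_mono Ioc_subset_Icc_self Ioc_subset_Icc_self))
  have := MeasureTheory.integral_integral_swap hint
  simpa [intervalIntegral.integral_of_le hab] using this

lemma my_aux (b : ℝ) (hb : 0 < b) (P Px Py : ℝ → ℝ → ℝ → ℝ → ℝ) (S : ℝ → ℝ → ℝ)
    (σstar : ℝ)
    (hP : Continuous fun p : ℝ × ℝ × ℝ × ℝ => P p.1 p.2.1 p.2.2.1 p.2.2.2)
    (hPx : Continuous fun p : ℝ × ℝ × ℝ × ℝ => Px p.1 p.2.1 p.2.2.1 p.2.2.2)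
    (hPy : Continuous fun p : ℝ × ℝ × ℝ × ℝ => Py p.1 p.2.1 p.2.2.1 p.2.2.2)
    (hS : Continuous fun p : ℝ × ℝ => S p.1 p.2)
    (hdx : ∀ μ ∈ Icc (-1 : ℝ) 1, ∀ φ ∈ Icc (0 : ℝ) (2 * π), ∀ y ∈ Icc (-b) b, ∀ x ∈ Icc (-b) b,
      HasDerivWithinAt (fun t => P t y φ μ) (Px x y φ μ) (Icc (-b) b) x)
    (hdy : ∀ μ ∈ Icc (-1 : ℝ) 1, ∀ φ ∈ Icc (0 : ℝ) (2 * π), ∀ y ∈ Icc (-b) b, ∀ x ∈ Icc (-b) b,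
      HasDerivWithinAt (fun t => P x t φ μ) (Py x y φ μ) (Icc (-b) b) y)
    (hlow : ∀ x ∈ Icc (-b) b, ∀ y ∈ Icc (-b) b, σstar ≤ S x y)
    (hinL : ∀ y ∈ Icc (-b) b, ∀ φ ∈ Icc (0 : ℝ) (2 * π), ∀ μ ∈ Icc (-1 : ℝ) 1,
      0 ≤ Real.cos φ → P (-b) y φ μ = 0)
    (hinR : ∀ y ∈ Icc (-b) b, ∀ φ ∈ Icc (0 : ℝ) (2 * π), ∀ μ ∈ Icc (-1 : ℝ) 1,
      Real.cos φ ≤ 0 → P b y φ μ = 0)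
    (hinB : ∀ x ∈ Icc (-b) b, ∀ φ ∈ Icc (0 : ℝ) (2 * π), ∀ μ ∈ Icc (-1 : ℝ) 1,
      0 ≤ Real.sin φ → P x (-b) φ μ = 0)
    (hinT : ∀ x ∈ Icc (-b) b, ∀ φ ∈ Icc (0 : ℝ) (2 * π), ∀ μ ∈ Icc (-1 : ℝ) 1,
      Real.sin φ ≤ 0 → P x b φ μ = 0) :
    σstar * ∫ μ in (-1 : ℝ)..1, ∫ φ in (0 : ℝ)..(2 * π), ∫ y in (-b)..b,
        ∫ x in (-b)..b, (P x y φ μ) ^ 2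
      ≤ ∫ μ in (-1 : ℝ)..1, ∫ φ in (0 : ℝ)..(2 * π), ∫ y in (-b)..b, ∫ x in (-b)..b,
          (Real.sqrt (1 - μ ^ 2) * (Real.cos φ * Px x y φ μ + Real.sin φ * Py x y φ μ)
            + S x y * P x y φ μ) * P x y φ μ := by
  have hab : (-b : ℝ) ≤ b := by linarith
  have key : ∀ μ ∈ Icc (-1 : ℝ) 1, ∀ φ ∈ Icc (0 : ℝ) (2 * π),
      σstar * ∫ y in (-b)..b, ∫ x in (-b)..b, (P x y φ μ) ^ 2
        ≤ ∫ y in (-b)..b, ∫ x in (-b)..b,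
            (Real.sqrt (1 - μ ^ 2) * (Real.cos φ * Px x y φ μ + Real.sin φ * Py x y φ μ)
              + S x y * P x y φ μ) * P x y φ μ := by
    intro μ hμ φ hφ
    set s : ℝ := Real.sqrt (1 - μ ^ 2) with hsdef
    have hs0 : 0 ≤ s := Real.sqrt_nonneg _
    have inner_eq : ∀ y : ℝ,
        (∫ x in (-b)..b,
            (s * (Real.cos φ * Px x y φ μ + Real.sin φ * Py x y φ μ)
              + S x y * P x y φ μ) * P x y φ μ)
        = (s * Real.cos φ) * (∫ x in (-b)..b, Px x y φ μ * P x y φ μ)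
          + ((s * Real.sin φ) * (∫ x in (-b)..b, Py x y φ μ * P x y φ μ)
            + ∫ x in (-b)..b, S x y * P x y φ μ ^ 2) := by
      intro y
      have iA : IntervalIntegrable
          (fun x => (s * Real.cos φ) * (Px x y φ μ * P x y φ μ)) volume (-b) b :=
        (by fun_prop : Continuous _).intervalIntegrable _ _
      have iB : IntervalIntegrable
          (fun x => (s * Real.sin φ) * (Py x y φ μ * P x y φ μ)) volume (-b) b :=
        (by fun_prop : Continuous _).intervalIntegrable _ _
      have iC : IntervalIntegrable (fun x => S x y * P x y φ μ ^ 2) volume (-b) b :=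
        (by fun_prop : Continuous _).intervalIntegrable _ _
      calc (∫ x in (-b)..b,
            (s * (Real.cos φ * Px x y φ μ + Real.sin φ * Py x y φ μ)
              + S x y * P x y φ μ) * P x y φ μ)
          = ∫ x in (-b)..b,
              ((s * Real.cos φ) * (Px x y φ μ * P x y φ μ)
                + ((s * Real.sin φ) * (Py x y φ μ * P x y φ μ)
                  + S x y * P x y φ μ ^ 2)) := by
            apply intervalIntegral.integral_congr
            intro x _hx
            dsimp only
            ring
        _ = (∫ x in (-b)..b, (s * Real.cos φ) * (Px x y φ μ * P x y φ μ))
              + ∫ x in (-b)..b, ((s * Real.sin φ) * (Py x y φ μ * P x y φ μ)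
                + S x y * P x y φ μ ^ 2) := integral_add iA (iB.add iC)
        _ = _ := by
            rw [integral_add iB iC, intervalIntegral.integral_const_mul, intervalIntegral.integral_const_mul]
    have outer_eq :
        (∫ y in (-b)..b, ∫ x in (-b)..b,
            (s * (Real.cos φ * Px x y φ μ + Real.sin φ * Py x y φ μ)
              + S x y * P x y φ μ) * P x y φ μ)
        = (s * Real.cos φ)
            * (∫ y in (-b)..b, ∫ x in (-b)..b, Px x y φ μ * P x y φ μ)
          + ((s * Real.sin φ)
              * (∫ y in (-b)..b, ∫ x in (-b)..b, Py x y φ μ * P x y φ μ)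
            + ∫ y in (-b)..b, ∫ x in (-b)..b, S x y * P x y φ μ ^ 2) := by
      have iA : IntervalIntegrable
          (fun y => (s * Real.cos φ) * ∫ x in (-b)..b, Px x y φ μ * P x y φ μ)
          volume (-b) b := (by fun_prop : Continuous _).intervalIntegrable _ _
      have iB : IntervalIntegrable
          (fun y => (s * Real.sin φ) * ∫ x in (-b)..b, Py x y φ μ * P x y φ μ)
          volume (-b) b := (by fun_prop : Continuous _).intervalIntegrable _ _
      have iC : IntervalIntegrable
          (fun y => ∫ x in (-b)..b, S x y * P x y φ μ ^ 2)
          volume (-b) b := (by fun_prop : Continuous _).intervalIntegrable _ _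
      rw [show (fun y => ∫ x in (-b)..b,
            (s * (Real.cos φ * Px x y φ μ + Real.sin φ * Py x y φ μ)
              + S x y * P x y φ μ) * P x y φ μ) = fun y =>
            (s * Real.cos φ) * (∫ x in (-b)..b, Px x y φ μ * P x y φ μ)
            + ((s * Real.sin φ) * (∫ x in (-b)..b, Py x y φ μ * P x y φ μ)
              + ∫ x in (-b)..b, S x y * P x y φ μ ^ 2) from funext inner_eq]
      rw [integral_add iA (iB.add iC), integral_add iB iC,
        intervalIntegral.integral_const_mul, intervalIntegral.integral_const_mul]
    have term1 : 0 ≤ (s * Real.cos φ)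
        * ∫ y in (-b)..b, ∫ x in (-b)..b, Px x y φ μ * P x y φ μ := by
      rw [mul_assoc]
      refine mul_nonneg hs0 ?_
      rw [← intervalIntegral.integral_const_mul]
      apply intervalIntegral.integral_nonneg hab
      intro y hy
      exact my_sign hab
        ((by fun_prop : Continuous fun x => P x y φ μ).continuousOn)
        (fun x hx => hdx μ hμ φ hφ y hy x hx)
        ((by fun_prop : Continuous _).intervalIntegrable _ _)
        (fun hc => hinL y hy φ hφ μ hμ hc)
        (fun hc => hinR y hy φ hφ μ hμ hc)
    have term2 : 0 ≤ (s * Real.sin φ)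
        * ∫ y in (-b)..b, ∫ x in (-b)..b, Py x y φ μ * P x y φ μ := by
      rw [my_swap hab (f := fun y x => Py x y φ μ * P x y φ μ) (by fun_prop)]
      rw [mul_assoc]
      refine mul_nonneg hs0 ?_
      rw [← intervalIntegral.integral_const_mul]
      apply intervalIntegral.integral_nonneg hab
      intro x hx
      exact my_sign hab
        ((by fun_prop : Continuous fun t => P x t φ μ).continuousOn)
        (fun y hy => hdy μ hμ φ hφ y hy x hx)
        ((by fun_prop : Continuous _).intervalIntegrable _ _)
        (fun hc => hinB x hx φ hφ μ hμ hc)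
        (fun hc => hinT x hx φ hφ μ hμ hc)
    have term3 : σstar * (∫ y in (-b)..b, ∫ x in (-b)..b, (P x y φ μ) ^ 2)
        ≤ ∫ y in (-b)..b, ∫ x in (-b)..b, S x y * P x y φ μ ^ 2 := by
      rw [← intervalIntegral.integral_const_mul]
      apply intervalIntegral.integral_mono_on hab
        ((by fun_prop : Continuous _).intervalIntegrable _ _)
        ((by fun_prop : Continuous _).intervalIntegrable _ _)
      intro y hy
      rw [← intervalIntegral.integral_const_mul]
      apply intervalIntegral.integral_mono_on hab
        ((by fun_prop : Continuous _).intervalIntegrable _ _)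
        ((by fun_prop : Continuous _).intervalIntegrable _ _)
      intro x hx
      exact mul_le_mul_of_nonneg_right (hlow x hx y hy) (sq_nonneg _)
    rw [outer_eq]
    linarith
  have h2π : (0 : ℝ) ≤ 2 * π := by linarith [Real.pi_pos]
  have keyφ : ∀ μ ∈ Icc (-1 : ℝ) 1,
      σstar * ∫ φ in (0 : ℝ)..(2 * π), ∫ y in (-b)..b, ∫ x in (-b)..b, (P x y φ μ) ^ 2
        ≤ ∫ φ in (0 : ℝ)..(2 * π), ∫ y in (-b)..b, ∫ x in (-b)..b,
            (Real.sqrt (1 - μ ^ 2) * (Real.cos φ * Px x y φ μ + Real.sin φ * Py x y φ μ)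
              + S x y * P x y φ μ) * P x y φ μ := by
    intro μ hμ
    rw [← intervalIntegral.integral_const_mul]
    apply intervalIntegral.integral_mono_on h2π
      ((by fun_prop : Continuous _).intervalIntegrable _ _)
      ((by fun_prop : Continuous _).intervalIntegrable _ _)
    intro φ hφ
    exact key μ hμ φ hφ
  rw [← intervalIntegral.integral_const_mul]
  apply intervalIntegral.integral_mono_on (by norm_num : (-1:ℝ) ≤ 1)
    ((by fun_prop : Continuous _).intervalIntegrable _ _)
    ((by fun_prop : Continuous _).intervalIntegrable _ _)
  intro μ hμ
  exact keyφ μ hμ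

/-- Coercivity of the streaming–absorption operator for 2D square (pin-cell)
geometry with vacuum boundary conditions: `(𝒟Ψ,Ψ) ≥ σ_* ‖Ψ‖₀²`. -/
theorem transport_coercivity_square
    (b : ℝ) (hb : 0 < b) (Ψ Ψx Ψy : ℝ → ℝ → ℝ → ℝ → ℝ) (sigmaT : ℝ → ℝ → ℝ)
    (σstar : ℝ) (hσstar : 0 < σstar)
    (hΨ : ContinuousOn (fun p : ℝ × ℝ × ℝ × ℝ => Ψ p.1 p.2.1 p.2.2.1 p.2.2.2)
      (Icc (-b) b ×ˢ Icc (-b) b ×ˢ Icc 0 (2 * π) ×ˢ Icc (-1) 1))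
    (hΨx : ContinuousOn (fun p : ℝ × ℝ × ℝ × ℝ => Ψx p.1 p.2.1 p.2.2.1 p.2.2.2)
      (Icc (-b) b ×ˢ Icc (-b) b ×ˢ Icc 0 (2 * π) ×ˢ Icc (-1) 1))
    (hΨy : ContinuousOn (fun p : ℝ × ℝ × ℝ × ℝ => Ψy p.1 p.2.1 p.2.2.1 p.2.2.2)
      (Icc (-b) b ×ˢ Icc (-b) b ×ˢ Icc 0 (2 * π) ×ˢ Icc (-1) 1))
    (hderivx : ∀ μ ∈ Icc (-1 : ℝ) 1, ∀ φ ∈ Icc (0 : ℝ) (2 * π),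
      ∀ y ∈ Icc (-b) b, ∀ x ∈ Icc (-b) b,
      HasDerivWithinAt (fun t => Ψ t y φ μ) (Ψx x y φ μ) (Icc (-b) b) x)
    (hderivy : ∀ μ ∈ Icc (-1 : ℝ) 1, ∀ φ ∈ Icc (0 : ℝ) (2 * π),
      ∀ y ∈ Icc (-b) b, ∀ x ∈ Icc (-b) b,
      HasDerivWithinAt (fun t => Ψ x t φ μ) (Ψy x y φ μ) (Icc (-b) b) y)
    (hsigmaT : ContinuousOn (fun p : ℝ × ℝ => sigmaT p.1 p.2)
      (Icc (-b) b ×ˢ Icc (-b) b))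
    (hlow : ∀ x ∈ Icc (-b) b, ∀ y ∈ Icc (-b) b, σstar ≤ sigmaT x y)
    (hinL : ∀ y ∈ Icc (-b) b, ∀ φ ∈ Icc (0 : ℝ) (2 * π), ∀ μ ∈ Icc (-1 : ℝ) 1,
      0 ≤ Real.cos φ → Ψ (-b) y φ μ = 0)
    (hinR : ∀ y ∈ Icc (-b) b, ∀ φ ∈ Icc (0 : ℝ) (2 * π), ∀ μ ∈ Icc (-1 : ℝ) 1,
      Real.cos φ ≤ 0 → Ψ b y φ μ = 0)
    (hinB : ∀ x ∈ Icc (-b) b, ∀ φ ∈ Icc (0 : ℝ) (2 * π), ∀ μ ∈ Icc (-1 : ℝ) 1,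
      0 ≤ Real.sin φ → Ψ x (-b) φ μ = 0)
    (hinT : ∀ x ∈ Icc (-b) b, ∀ φ ∈ Icc (0 : ℝ) (2 * π), ∀ μ ∈ Icc (-1 : ℝ) 1,
      Real.sin φ ≤ 0 → Ψ x b φ μ = 0) :
    σstar * ∫ μ in (-1 : ℝ)..1, ∫ φ in (0 : ℝ)..(2 * π), ∫ y in (-b)..b,
        ∫ x in (-b)..b, (Ψ x y φ μ) ^ 2
      ≤ ∫ μ in (-1 : ℝ)..1, ∫ φ in (0 : ℝ)..(2 * π), ∫ y in (-b)..b,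
          ∫ x in (-b)..b,
          (Real.sqrt (1 - μ ^ 2)
              * (Real.cos φ * Ψx x y φ μ + Real.sin φ * Ψy x y φ μ)
            + sigmaT x y * Ψ x y φ μ) * Ψ x y φ μ := by
  have hab : (-b : ℝ) ≤ b := by linarith
  have h2π : (0 : ℝ) ≤ 2 * π := by linarith [Real.pi_pos]
  have hK4 : IsClosed (Icc (-b) b ×ˢ Icc (-b) b ×ˢ Icc (0:ℝ) (2 * π) ×ˢ Icc (-1:ℝ) 1) :=
    isClosed_Icc.prod (isClosed_Icc.prod (isClosed_Icc.prod isClosed_Icc))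
  have hK2 : IsClosed (Icc (-b) b ×ˢ Icc (-b) b) := isClosed_Icc.prod isClosed_Icc
  obtain ⟨Pe, hPec, hPee⟩ := my_exists_ext hK4 hΨ
  obtain ⟨Pxe, hPxec, hPxee⟩ := my_exists_ext hK4 hΨx
  obtain ⟨Pye, hPyec, hPyee⟩ := my_exists_ext hK4 hΨy
  obtain ⟨Se, hSec, hSee⟩ := my_exists_ext hK2 hsigmaT
  set P : ℝ → ℝ → ℝ → ℝ → ℝ := fun x y φ μ => Pe (x, y, φ, μ) with hPdef
  set Px : ℝ → ℝ → ℝ → ℝ → ℝ := fun x y φ μ => Pxe (x, y, φ, μ) with hPxdef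
  set Py : ℝ → ℝ → ℝ → ℝ → ℝ := fun x y φ μ => Pye (x, y, φ, μ) with hPydef
  set S : ℝ → ℝ → ℝ := fun x y => Se (x, y) with hSdef
  have memK4 : ∀ {x y φ μ : ℝ}, x ∈ Icc (-b) b → y ∈ Icc (-b) b →
      φ ∈ Icc (0:ℝ) (2 * π) → μ ∈ Icc (-1:ℝ) 1 →
      ((x, y, φ, μ) : ℝ × ℝ × ℝ × ℝ) ∈
        Icc (-b) b ×ˢ Icc (-b) b ×ˢ Icc (0:ℝ) (2 * π) ×ˢ Icc (-1:ℝ) 1 :=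
    fun hx hy hφ hμ => ⟨hx, hy, hφ, hμ⟩
  have hPeq : ∀ {x y φ μ : ℝ}, x ∈ Icc (-b) b → y ∈ Icc (-b) b →
      φ ∈ Icc (0:ℝ) (2 * π) → μ ∈ Icc (-1:ℝ) 1 → P x y φ μ = Ψ x y φ μ :=
    fun hx hy hφ hμ => hPee (memK4 hx hy hφ hμ)
  have hPxeq : ∀ {x y φ μ : ℝ}, x ∈ Icc (-b) b → y ∈ Icc (-b) b →
      φ ∈ Icc (0:ℝ) (2 * π) → μ ∈ Icc (-1:ℝ) 1 → Px x y φ μ = Ψx x y φ μ :=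
    fun hx hy hφ hμ => hPxee (memK4 hx hy hφ hμ)
  have hPyeq : ∀ {x y φ μ : ℝ}, x ∈ Icc (-b) b → y ∈ Icc (-b) b →
      φ ∈ Icc (0:ℝ) (2 * π) → μ ∈ Icc (-1:ℝ) 1 → Py x y φ μ = Ψy x y φ μ :=
    fun hx hy hφ hμ => hPyee (memK4 hx hy hφ hμ)
  have hSeq : ∀ {x y : ℝ}, x ∈ Icc (-b) b → y ∈ Icc (-b) b → S x y = sigmaT x y :=
    fun hx hy => hSee ⟨hx, hy⟩
  have hmb : (-b : ℝ) ∈ Icc (-b) b := ⟨le_refl _, hab⟩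
  have hpb : (b : ℝ) ∈ Icc (-b) b := ⟨hab, le_refl _⟩
  -- rewrite both sides of the goal in terms of the extensions
  have eqLHS : (∫ μ in (-1 : ℝ)..1, ∫ φ in (0 : ℝ)..(2 * π), ∫ y in (-b)..b,
        ∫ x in (-b)..b, (Ψ x y φ μ) ^ 2)
      = ∫ μ in (-1 : ℝ)..1, ∫ φ in (0 : ℝ)..(2 * π), ∫ y in (-b)..b,
        ∫ x in (-b)..b, (P x y φ μ) ^ 2 := by
    apply intervalIntegral.integral_congr
    rw [uIcc_of_le (by norm_num : (-1:ℝ) ≤ 1)]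
    intro μ hμ
    apply intervalIntegral.integral_congr
    rw [uIcc_of_le h2π]
    intro φ hφ
    apply intervalIntegral.integral_congr
    rw [uIcc_of_le hab]
    intro y hy
    apply intervalIntegral.integral_congr
    rw [uIcc_of_le hab]
    intro x hx
    dsimp only
    rw [hPeq hx hy hφ hμ]
  have eqRHS : (∫ μ in (-1 : ℝ)..1, ∫ φ in (0 : ℝ)..(2 * π), ∫ y in (-b)..b,
        ∫ x in (-b)..b,
        (Real.sqrt (1 - μ ^ 2) * (Real.cos φ * Ψx x y φ μ + Real.sin φ * Ψy x y φ μ)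
          + sigmaT x y * Ψ x y φ μ) * Ψ x y φ μ)
      = ∫ μ in (-1 : ℝ)..1, ∫ φ in (0 : ℝ)..(2 * π), ∫ y in (-b)..b,
        ∫ x in (-b)..b,
        (Real.sqrt (1 - μ ^ 2) * (Real.cos φ * Px x y φ μ + Real.sin φ * Py x y φ μ)
          + S x y * P x y φ μ) * P x y φ μ := by
    apply intervalIntegral.integral_congr
    rw [uIcc_of_le (by norm_num : (-1:ℝ) ≤ 1)]
    intro μ hμ
    apply intervalIntegral.integral_congr
    rw [uIcc_of_le h2π]
    intro φ hφ
    apply intervalIntegral.integral_congr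
    rw [uIcc_of_le hab]
    intro y hy
    apply intervalIntegral.integral_congr
    rw [uIcc_of_le hab]
    intro x hx
    dsimp only
    rw [hPeq hx hy hφ hμ, hPxeq hx hy hφ hμ, hPyeq hx hy hφ hμ, hSeq hx hy]
  rw [eqLHS, eqRHS]
  apply my_aux b hb P Px Py S σstar
  · fun_prop
  · fun_prop
  · fun_prop
  · fun_prop
  · intro μ hμ φ hφ y hy x hx
    have h := (hderivx μ hμ φ hφ y hy x hx).congr
      (fun t ht => hPeq ht hy hφ hμ) (hPeq hx hy hφ hμ)
    rwa [← hPxeq hx hy hφ hμ] at h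
  · intro μ hμ φ hφ y hy x hx
    have h := (hderivy μ hμ φ hφ y hy x hx).congr
      (fun t ht => hPeq hx ht hφ hμ) (hPeq hx hy hφ hμ)
    rwa [← hPyeq hx hy hφ hμ] at h
  · intro x hx y hy
    rw [hSeq hx hy]
    exact hlow x hx y hy
  · intro y hy φ hφ μ hμ hc
    rw [hPeq hmb hy hφ hμ]
    exact hinL y hy φ hφ μ hμ hc
  · intro y hy φ hφ μ hμ hc
    rw [hPeq hpb hy hφ hμ]
    exact hinR y hy φ hφ μ hμ hc
  · intro x hx φ hφ μ hμ hc
    rw [hPeq hx hmb hφ hμ]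
    exact hinB x hx φ hφ μ hμ hc
  · intro x hx φ hφ μ hμ hc
    rw [hPeq hx hpb hφ hμ]
    exact hinT x hx φ hφ μ hμ hc
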